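/- Let A be a finite abelian group and χ the character of a finite-dimensional complex representation of A which is constant on A ∖ {1} and whose kernel is not all of A. Then there exist an integer m > 0 and an integer c such that χ = m·ρ + c·1_A, where ρ is the regular character of A (ρ(1) = |A|, ρ(a) = 0 for a ≠ 1) and 1_A is the trivial character. Moreover, for every proper subgroup B of A, every irreducible character of B occurs as a constituent of the restriction χ|_B. -/

import Mathlib

open scoped Classical
open CategoryTheory MonoidalCategory

/-- The 1-dimensional representation attached to a character `ψ : A →* ℂˣ`. -/
noncomputable def charRep {A : Type} [Monoid A] (ψ : A →* ℂˣ) : Representation ℂ A ℂ :=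
  (Algebra.lmul ℂ ℂ).toRingHom.toMonoidHom.comp ((Units.coeHom ℂ).comp ψ)

lemma trace_end_complex (f : ℂ →ₗ[ℂ] ℂ) : LinearMap.trace ℂ ℂ f = f 1 := by
  have hf : f = f 1 • LinearMap.id := by
    ext
    simp
  conv_lhs => rw [hf]
  rw [map_smul, LinearMap.trace_id, Module.finrank_self]
  simp

lemma charRep_character {A : Type} [Monoid A] (ψ : A →* ℂˣ) (a : A) :
    (FDRep.of (charRep ψ)).character a = (ψ a : ℂ) := by
  have : (FDRep.of (charRep ψ)).character a = LinearMap.trace ℂ ℂ (charRep ψ a) := rfl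
  rw [this, trace_end_complex]
  simp [charRep]

lemma mult_exists {A : Type} [CommGroup A] [Fintype A] (V : FDRep ℂ A) (ψ : A →* ℂˣ) :
    ∃ n : ℕ, ∑ a : A, V.character a * ((ψ a : ℂˣ) : ℂ)
      = (Fintype.card A : ℂ) * n := by
  haveI : Invertible (Fintype.card A : ℂ) :=
    invertibleOfNonzero (Nat.cast_ne_zero.mpr Fintype.card_ne_zero)
  refine ⟨Module.finrank ℂ (Representation.invariants (V ⊗ FDRep.of (charRep ψ)).ρ), ?_⟩
  have h := FDRep.average_char_eq_finrank_invariants (V ⊗ FDRep.of (charRep ψ))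
  have hchar : ∀ a : A, (V ⊗ FDRep.of (charRep ψ)).character a
      = V.character a * ((ψ a : ℂˣ) : ℂ) := by
    intro a
    rw [FDRep.char_tensor]
    simp [charRep_character]
  rw [Finset.sum_congr rfl (fun a _ => hchar a)] at h
  calc ∑ a : A, V.character a * ((ψ a : ℂˣ) : ℂ)
      = (Fintype.card A : ℂ) * (⅟(Fintype.card A : ℂ) * ∑ a : A, V.character a * ((ψ a : ℂˣ) : ℂ)) := by
        rw [mul_invOf_cancel_left]
    _ = (Fintype.card A : ℂ) * _ := by rw [invOf_eq_inv, ← Nat.card_eq_fintype_card, h]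

lemma sum_split {G : Type} [Group G] [Fintype G] (f : G → ℂ) (θ : G →* ℂ) (c : ℂ)
    (hf : ∀ g, g ≠ 1 → f g = c) :
    ∑ g : G, f g * θ g = f 1 - c + c * ∑ g : G, θ g := by
  classical
  rw [← Finset.add_sum_erase Finset.univ (fun g => f g * θ g) (Finset.mem_univ 1)]
  rw [Finset.sum_congr rfl (fun g hg => by rw [hf g (Finset.ne_of_mem_erase hg)])]
  rw [← Finset.mul_sum, Finset.sum_erase_eq_sub (Finset.mem_univ 1), map_one θ]
  ring


/-- if the character `χ` of a complex representation of a finite abelian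
group `A` is constant on `A ∖ {1}` and its kernel is not all of `A`, then
`χ = m·ρ_A^reg + c·1_A` with `m > 0`, and for every proper subgroup `B` every
irreducible character (i.e. linear character, as `B` is abelian) of `B` occurs in `χ|_B`. -/
theorem stmt_2 {A : Type} [CommGroup A] [Fintype A] (V : FDRep ℂ A)
    (hconst : ∀ a a' : A, a ≠ 1 → a' ≠ 1 → V.character a = V.character a')
    (hker : ∃ a : A, V.character a ≠ V.character 1) :
    (∃ m c : ℤ, 0 < m ∧
        ∀ a : A, V.character a
          = (m : ℂ) * (if a = 1 then (Fintype.card A : ℂ) else 0) + (c : ℂ)) ∧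
      ∀ B : Subgroup A, B ≠ ⊤ → ∀ ψ : B →* ℂˣ,
        ∑ b : B, V.character (b : A) * (starRingEnd ℂ) (ψ b : ℂ) ≠ 0 := by
  obtain ⟨a₀, ha₀⟩ := hker
  have ha₀1 : a₀ ≠ 1 := fun h => ha₀ (by rw [h])
  set d := V.character 1 with hd
  set c := V.character a₀ with hcdef
  have hc : ∀ a : A, a ≠ 1 → V.character a = c := fun a ha => hconst a a₀ ha ha₀1
  have hNne : (Fintype.card A : ℂ) ≠ 0 := Nat.cast_ne_zero.mpr Fintype.card_ne_zero
  obtain ⟨ψ₀, hψ₀⟩ :=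
    CommGroup.exists_apply_ne_one_of_hasEnoughRootsOfUnity A ℂ ha₀1
  obtain ⟨m, hm⟩ := mult_exists V ψ₀⁻¹
  obtain ⟨m₁, hm₁⟩ := mult_exists V 1
  have hθ₀ : ((Units.coeHom ℂ).comp ψ₀⁻¹ : A →* ℂ) ≠ 1 := by
    intro h
    apply hψ₀
    have := congrFun (congrArg (fun (f : A →* ℂ) => (f : A → ℂ)) h) a₀
    simp only [MonoidHom.coe_comp, Function.comp_apply, Units.coeHom_apply,
      MonoidHom.inv_apply, MonoidHom.one_apply] at this
    have h1 : (ψ₀ a₀ : ℂ) = 1 := by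
      have := congrArg (fun z => z⁻¹) this
      simpa using this
    exact Units.ext h1
  have hsum0 : ∑ a : A, (((Units.coeHom ℂ).comp ψ₀⁻¹ : A →* ℂ)) a = 0 :=
    sum_hom_units_eq_zero _ hθ₀
  have key := sum_split V.character ((Units.coeHom ℂ).comp ψ₀⁻¹) c hc
  rw [hsum0, mul_zero, add_zero] at key
  have hm' : (Fintype.card A : ℂ) * m = d - c := by
    rw [← key, ← hm]
    rfl
  have key1 := sum_split V.character ((Units.coeHom ℂ).comp (1 : A →* ℂˣ)) c hc
  have hsum1 : ∑ a : A, (((Units.coeHom ℂ).comp (1 : A →* ℂˣ) : A →* ℂ)) a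
      = (Fintype.card A : ℂ) := by simp
  rw [hsum1] at key1
  have hm₁' : (Fintype.card A : ℂ) * m₁ = d - c + c * (Fintype.card A : ℂ) := by
    rw [← key1, ← hm₁]
    rfl
  have hcval : c = (m₁ : ℂ) - (m : ℂ) :=
    mul_left_cancel₀ hNne (by rw [mul_sub, hm₁', hm']; ring)
  have hmpos : m ≠ 0 := by
    intro h
    subst h
    simp only [Nat.cast_zero, mul_zero] at hm'
    exact ha₀ (by linear_combination hm')
  constructor
  · refine ⟨(m : ℤ), (m₁ : ℤ) - (m : ℤ), by exact_mod_cast Nat.pos_of_ne_zero hmpos, ?_⟩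
    intro a
    by_cases h : a = 1
    · subst h
      simp only [if_pos rfl]
      push_cast
      linear_combination hcval - hm'
    · rw [if_neg h, hc a h, hcval]
      push_cast
      ring
  · intro B hB ψ
    set θ : B →* ℂ := (starRingEnd ℂ).toMonoidHom.comp ((Units.coeHom ℂ).comp ψ) with hθdef
    have hgoal : ∑ b : B, V.character (b : A) * (starRingEnd ℂ) (ψ b : ℂ)
        = ∑ b : B, (fun b : B => V.character (b : A)) b * θ b := rfl
    have split := sum_split (fun b : B => V.character (b : A)) θ c
      (fun b hb => hc (b : A) (fun h => hb (OneMemClass.coe_eq_one.mp h)))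
    simp only [OneMemClass.coe_one] at split
    rw [hgoal, split]
    by_cases hθ1 : θ = 1
    · have hS : ∑ b : B, θ b = (Fintype.card B : ℂ) := by simp [hθ1]
      rw [hS]
      obtain ⟨a, haB⟩ : ∃ a : A, a ∉ B := by
        by_contra hcon
        push_neg at hcon
        exact hB ((Subgroup.eq_top_iff' B).mpr hcon)
      have hlt : Fintype.card B < Fintype.card A := by
        have h := Fintype.card_subtype_lt (p := fun x => x ∈ B) haB
        convert h using 2
      have hint : 0 < (m : ℤ) * (Fintype.card A : ℤ)
          + ((m₁ : ℤ) - (m : ℤ)) * (Fintype.card B : ℤ) := by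
        have h1 : 1 ≤ (m : ℤ) := by exact_mod_cast Nat.one_le_iff_ne_zero.mpr hmpos
        have h2 : (0 : ℤ) ≤ (m₁ : ℤ) := Int.natCast_nonneg m₁
        have h3 : (Fintype.card B : ℤ) < (Fintype.card A : ℤ) := by exact_mod_cast hlt
        have h4 : (0 : ℤ) ≤ (Fintype.card B : ℤ) := Int.natCast_nonneg _
        nlinarith
      have heq : V.character 1 - c + c * (Fintype.card B : ℂ)
          = (((m : ℤ) * (Fintype.card A : ℤ)
              + ((m₁ : ℤ) - (m : ℤ)) * (Fintype.card B : ℤ) : ℤ) : ℂ) := by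
        push_cast
        linear_combination (Fintype.card B : ℂ) * hcval - hm'
      rw [heq]
      exact_mod_cast hint.ne'
    · have hS : ∑ b : B, θ b = 0 := sum_hom_units_eq_zero θ hθ1
      rw [hS, mul_zero, add_zero, ← hm']
      exact mul_ne_zero hNne (Nat.cast_ne_zero.mpr hmpos)
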